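/- arXiv:1205.1298 — 2 statements merged into one kernel-verified Lean document; each statement's English description precedes it below -/
import Mathlib

section
/- Let H : ℝ → M_n(ℂ) with H(t) Hermitian for all t, F_1,…,F_K : ℝ → M_n(ℂ), γ_1,…,γ_K > 0, with Lindblad dissipator L(t)ρ = Σ_α γ_α (F_α(t) ρ F_α(t)† − (1/2)(F_α(t)† F_α(t) ρ + ρ F_α(t)† F_α(t))). Let ρ : ℝ → M_n(ℂ) be differentiable with ρ(t) Hermitian for all t and ρ′(t) = −i[H(t), ρ(t)] + L(t)ρ(t). Suppose at some time t₀ the state is pure: ρ(t₀) = φφ† with ‖φ‖ = 1. If the derivative of the purity vanishes at t₀, i.e. (d/dt Tr[ρ(t)²])(t₀) = 0, then F_α(t₀) φ = ⟨φ, F_α(t₀) φ⟩ φ for every α = 1,…,K. -/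
open Matrix
open scoped ComplexConjugate InnerProductSpace

/-- The Lindblad dissipator with jump operators `F α` and rates `γ α`. -/
noncomputable def dissip {n K : ℕ} (γ : Fin K → ℝ) (F : Fin K → Matrix (Fin n) (Fin n) ℂ)
    (ρ : Matrix (Fin n) (Fin n) ℂ) : Matrix (Fin n) (Fin n) ℂ :=
  ∑ α, (γ α : ℂ) •
    (F α * ρ * (F α)ᴴ - (1 / 2 : ℂ) • ((F α)ᴴ * F α * ρ + ρ * ((F α)ᴴ * F α)))

/-- The rank-one outer product `φφ†` of a vector with itself. -/
noncomputable def outer {n : ℕ} (φ : EuclideanSpace ℂ (Fin n)) : Matrix (Fin n) (Fin n) ℂ :=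
  fun i j => φ i * conj (φ j)

/-- A matrix acting on a vector of `EuclideanSpace ℂ (Fin n)`. -/
noncomputable def matVec {n : ℕ} (M : Matrix (Fin n) (Fin n) ℂ)
    (φ : EuclideanSpace ℂ (Fin n)) : EuclideanSpace ℂ (Fin n) :=
  WithLp.toLp 2 (fun i => ∑ j, M i j * φ j)

section Helpers

variable {n : ℕ} (φ ψ : EuclideanSpace ℂ (Fin n)) (M N : Matrix (Fin n) (Fin n) ℂ)

lemma outer_mul_self (hφ : ‖φ‖ = 1) : outer φ * outer φ = outer φ := by
  have h : ∑ k, conj (φ k) * φ k = 1 := by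
    have := @inner_self_eq_norm_sq_to_K ℂ _ _ _ _ φ
    rw [hφ] at this
    simp only [PiLp.inner_apply, RCLike.inner_apply] at this
    rw [RCLike.ofReal_one, one_pow] at this
    rw [← this]; exact Finset.sum_congr rfl fun k _ => mul_comm _ _
  ext i j
  simp only [Matrix.mul_apply, outer]
  calc ∑ k, φ i * conj (φ k) * (φ k * conj (φ j))
      = (φ i * conj (φ j)) * ∑ k, conj (φ k) * φ k := by
        rw [Finset.mul_sum]; congr 1; ext k; ring
    _ = φ i * conj (φ j) := by rw [h, mul_one]

lemma conj_outer : M * outer φ * Mᴴ = outer (matVec M φ) := by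
  ext i j
  simp only [Matrix.mul_apply, outer, matVec, Matrix.conjTranspose_apply, map_sum, star_mul',
    Finset.sum_mul, Finset.mul_sum, starRingEnd_apply]
  refine Finset.sum_congr rfl fun k _ => Finset.sum_congr rfl fun l _ => ?_
  ring

lemma trace_mul_outer : (M * outer φ).trace = ⟪φ, matVec M φ⟫_ℂ := by
  simp only [Matrix.trace, Matrix.mul_apply, Matrix.diag_apply, outer, matVec,
    PiLp.inner_apply, RCLike.inner_apply]
  congr 1; ext i
  rw [Finset.sum_mul]
  congr 1; ext j
  ring

lemma trace_outer_mul_outer : (outer ψ * outer φ).trace = ⟪φ, ψ⟫_ℂ * conj ⟪φ, ψ⟫_ℂ := by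
  rw [trace_mul_outer]
  have : matVec (outer ψ) φ = ⟪ψ, φ⟫_ℂ • ψ := by
    ext i
    simp [matVec, outer, PiLp.inner_apply, RCLike.inner_apply, Finset.sum_mul, Finset.mul_sum]
    congr 1; ext j; ring
  rw [this, inner_smul_right, show ⟪ψ, φ⟫_ℂ = conj ⟪φ, ψ⟫_ℂ from (inner_conj_symm ψ φ).symm]
  ring

lemma matVec_mul : matVec (M * N) φ = matVec M (matVec N φ) := by
  ext i
  simp only [matVec, Matrix.mul_apply, Finset.sum_mul, Finset.mul_sum]
  rw [Finset.sum_comm]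
  congr 1; ext j; congr 1; ext k; ring

lemma inner_matVec_conjT : ⟪φ, matVec Mᴴ ψ⟫_ℂ = ⟪matVec M φ, ψ⟫_ℂ := by
  simp only [matVec, PiLp.inner_apply, RCLike.inner_apply, Matrix.conjTranspose_apply,
    map_sum, star_mul', Finset.mul_sum, Finset.sum_mul, starRingEnd_apply]
  rw [Finset.sum_comm]
  congr 1; ext j; congr 1; ext k; ring

lemma trace_conjT_mul_outer : (Mᴴ * M * outer φ).trace = ⟪matVec M φ, matVec M φ⟫_ℂ := by
  rw [trace_mul_outer, matVec_mul, inner_matVec_conjT]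

end Helpers

/-- (Necessity.) If a Hermitian solution of the Lindblad master
equation (with strictly positive rates) is pure at time `t₀`, `ρ(t₀) = φφ†` with
`‖φ‖ = 1`, and the derivative of the purity vanishes at `t₀`, then `φ` is a common
eigenvector of all jump operators at time `t₀`. -/
theorem tDFS_vanishing_purity_derivative_implies_eigenvector (n K : ℕ)
    (H : ℝ → Matrix (Fin n) (Fin n) ℂ) (hH : ∀ t, (H t)ᴴ = H t)
    (F : Fin K → ℝ → Matrix (Fin n) (Fin n) ℂ)
    (γ : Fin K → ℝ) (hγ : ∀ α, 0 < γ α)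
    (ρ ρ' : ℝ → Matrix (Fin n) (Fin n) ℂ)
    (hder : ∀ t i j, HasDerivAt (fun s => ρ s i j) (ρ' t i j) t)
    (hherm : ∀ t, (ρ t)ᴴ = ρ t)
    (hmaster : ∀ t, ρ' t =
      (-Complex.I) • (H t * ρ t - ρ t * H t) + dissip γ (fun α => F α t) (ρ t))
    (t₀ : ℝ) (φ : EuclideanSpace ℂ (Fin n)) (hφ : ‖φ‖ = 1)
    (hpure : ρ t₀ = outer φ)
    (hpurity : HasDerivAt (fun s => (ρ s * ρ s).trace) 0 t₀) :
    ∀ α, matVec (F α t₀) φ = ⟪φ, matVec (F α t₀) φ⟫_ℂ • φ := by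
  classical
  set P : Matrix (Fin n) (Fin n) ℂ := outer φ with hP
  have hPP : P * P = P := outer_mul_self φ hφ
  set ψ : Fin K → EuclideanSpace ℂ (Fin n) := fun α => matVec (F α t₀) φ with hψ
  set c : Fin K → ℂ := fun α => ⟪φ, ψ α⟫_ℂ with hc
  -- Step 1: the derivative of the purity is `Tr(ρ'ρ) + Tr(ρρ')`.
  have hD : HasDerivAt (fun s => (ρ s * ρ s).trace)
      ((ρ' t₀ * ρ t₀).trace + (ρ t₀ * ρ' t₀).trace) t₀ := by
    have h1 : (fun s => (ρ s * ρ s).trace)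
        = fun s => ∑ i, ∑ j, ρ s i j * ρ s j i := by
      funext s; simp [Matrix.trace, Matrix.mul_apply]
    have h2 : (ρ' t₀ * ρ t₀).trace + (ρ t₀ * ρ' t₀).trace
        = ∑ i, ∑ j, (ρ' t₀ i j * ρ t₀ j i + ρ t₀ i j * ρ' t₀ j i) := by
      simp [Matrix.trace, Matrix.mul_apply, Finset.sum_add_distrib]
    rw [h1, h2]
    exact HasDerivAt.fun_sum fun i _ => HasDerivAt.fun_sum fun j _ =>
      (hder t₀ i j).mul (hder t₀ j i)
  have h0 : (ρ' t₀ * ρ t₀).trace = 0 := by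
    have hu := hD.unique hpurity
    rw [Matrix.trace_mul_comm (ρ t₀) (ρ' t₀)] at hu
    linear_combination hu / 2
  -- Step 2: compute the trace using the master equation.
  rw [hmaster t₀, hpure] at h0
  have hham : ((H t₀ * P - P * H t₀) * P).trace = 0 := by
    rw [sub_mul, Matrix.trace_sub, mul_assoc, hPP, Matrix.trace_mul_comm (P * H t₀) P,
      ← mul_assoc, hPP, Matrix.trace_mul_comm P (H t₀), sub_self]
  have hdis : ∀ α : Fin K,
      (((F α t₀) * P * (F α t₀)ᴴ
        - (1 / 2 : ℂ) • ((F α t₀)ᴴ * (F α t₀) * P + P * ((F α t₀)ᴴ * (F α t₀)))) * P).trace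
      = c α * conj (c α) - ⟪ψ α, ψ α⟫_ℂ := by
    intro α
    have e1 : ((F α t₀) * P * (F α t₀)ᴴ * P).trace = c α * conj (c α) := by
      rw [hP, conj_outer, trace_outer_mul_outer]
    have e2 : ((F α t₀)ᴴ * (F α t₀) * P * P).trace = ⟪ψ α, ψ α⟫_ℂ := by
      rw [mul_assoc, hPP, hP, trace_conjT_mul_outer]
    have e3 : (P * ((F α t₀)ᴴ * (F α t₀)) * P).trace = ⟪ψ α, ψ α⟫_ℂ := by
      rw [Matrix.trace_mul_comm, ← mul_assoc, hPP, Matrix.trace_mul_comm, hP,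
        trace_conjT_mul_outer]
    rw [sub_mul, Matrix.smul_mul, add_mul, Matrix.trace_sub, Matrix.trace_smul,
      Matrix.trace_add, e1, e2, e3, smul_eq_mul]
    ring
  have hsumc : ∑ α : Fin K, (γ α : ℂ) * (c α * conj (c α) - ⟪ψ α, ψ α⟫_ℂ) = 0 := by
    calc ∑ α : Fin K, (γ α : ℂ) * (c α * conj (c α) - ⟪ψ α, ψ α⟫_ℂ)
        = (((-Complex.I) • (H t₀ * P - P * H t₀) + dissip γ (fun α => F α t₀) P) * P).trace := by
          rw [add_mul, Matrix.trace_add, Matrix.smul_mul, Matrix.trace_smul, hham, smul_zero,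
            zero_add, dissip, Finset.sum_mul, Matrix.trace_sum]
          congr 1; ext α
          rw [Matrix.smul_mul, Matrix.trace_smul, hdis α, smul_eq_mul]
      _ = 0 := h0
  -- Step 3: pass to real numbers.
  have hinner : ∀ β : Fin K, ⟪ψ β, ψ β⟫_ℂ = ((‖ψ β‖ ^ 2 : ℝ) : ℂ) := by
    intro β; rw [@inner_self_eq_norm_sq_to_K ℂ]; norm_cast
  have hreal : ∑ α : Fin K, γ α * (‖ψ α‖ ^ 2 - ‖c α‖ ^ 2) = 0 := by
    have : ((∑ α : Fin K, γ α * (‖ψ α‖ ^ 2 - ‖c α‖ ^ 2) : ℝ) : ℂ)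
        = -∑ α : Fin K, (γ α : ℂ) * (c α * conj (c α) - ⟪ψ α, ψ α⟫_ℂ) := by
      rw [← Finset.sum_neg_distrib]
      push_cast
      refine Finset.sum_congr rfl fun α _ => ?_
      rw [Complex.mul_conj, hinner α, Complex.normSq_eq_norm_sq]
      push_cast
      ring
    rw [hsumc, neg_zero] at this
    exact_mod_cast this
  have hterm : ∀ α : Fin K, ‖c α‖ = ‖ψ α‖ := by
    intro α
    have hle : ∀ β : Fin K, ‖c β‖ ^ 2 ≤ ‖ψ β‖ ^ 2 := by
      intro β
      have h1 : ‖c β‖ ≤ ‖φ‖ * ‖ψ β‖ := norm_inner_le_norm φ (ψ β)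
      rw [hφ, one_mul] at h1
      exact pow_le_pow_left₀ (norm_nonneg _) h1 2
    have hnn : ∀ β ∈ Finset.univ, 0 ≤ γ β * (‖ψ β‖ ^ 2 - ‖c β‖ ^ 2) := fun β _ =>
      mul_nonneg (hγ β).le (by linarith [hle β])
    have := (Finset.sum_eq_zero_iff_of_nonneg hnn).mp hreal α (Finset.mem_univ α)
    have hz : ‖ψ α‖ ^ 2 - ‖c α‖ ^ 2 = 0 := by
      rcases mul_eq_zero.mp this with h | h
      · exact absurd h (hγ α).ne'
      · exact h
    have hsq : ‖c α‖ ^ 2 = ‖ψ α‖ ^ 2 := by linarith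
    nlinarith [norm_nonneg (c α), norm_nonneg (ψ α)]
  -- Step 4: Cauchy–Schwarz equality case.
  intro α
  by_cases hz : ψ α = 0
  · show ψ α = ⟪φ, ψ α⟫_ℂ • φ
    rw [hz, inner_zero_right, zero_smul]
  · have hφ0 : φ ≠ 0 := by
      intro h; rw [h, norm_zero] at hφ; exact one_ne_zero hφ.symm
    have heq : ‖⟪φ, ψ α⟫_ℂ‖ = ‖φ‖ * ‖ψ α‖ := by rw [hφ, one_mul]; exact hterm α
    obtain ⟨r, hr0, hrψ⟩ := (norm_inner_eq_norm_iff hφ0 hz).mp heq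
    show ψ α = ⟪φ, ψ α⟫_ℂ • φ
    have hcr : ⟪φ, ψ α⟫_ℂ = r := by
      rw [hrψ, inner_smul_right, @inner_self_eq_norm_sq_to_K ℂ, hφ]
      simp
    rw [hcr, hrψ]
end

section
/- Let H̄, Ḡ, F̄_1,…,F̄_K ∈ M_n(ℂ) with H̄ and Ḡ Hermitian, let γ_1,…,γ_K ≥ 0 and c_1,…,c_K ∈ ℂ, and let L̄(σ) = Σ_α γ_α (F̄_α σ F̄_α† − (1/2)(F̄_α† F̄_α σ + σ F̄_α† F̄_α)). If φ ∈ ℂ^n with ‖φ‖ = 1 satisfies F̄_α φ = c_α φ for all α, then for ρ̄ = φφ† one has −i[H̄, ρ̄] − i[Ḡ, ρ̄] + L̄(ρ̄) = −i[H̄_eff, ρ̄], where H̄_eff = H̄ + Ḡ + (i/2) Σ_{α=1}^K γ_α (c̄_α F̄_α − c_α F̄_α†); that is, in the rotating frame the full master-equation generator acts on such a pure state as a commutator with the effective Hamiltonian H̄_eff. -/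
open Matrix
open scoped ComplexConjugate

/-- In the rotating frame, on a pure common eigenstate
`ρ̄ = φφ†` of the jump operators (`F̄_α φ = c_α φ`), the full master-equation generator
`-i[H̄,ρ̄] - i[Ḡ,ρ̄] + L̄(ρ̄)` acts as the commutator `-i[H̄_eff, ρ̄]` with the effective
Hamiltonian `H̄_eff = H̄ + Ḡ + (i/2) Σ_α γ_α (c̄_α F̄_α − c_α F̄_αᴴ)`. -/
theorem tDFS_generator_acts_as_effective_Hamiltonian (n K : ℕ)
    (H G : Matrix (Fin n) (Fin n) ℂ) (hH : Hᴴ = H) (hG : Gᴴ = G)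
    (F : Fin K → Matrix (Fin n) (Fin n) ℂ) (γ : Fin K → ℝ) (hγ : ∀ α, 0 ≤ γ α)
    (c : Fin K → ℂ) (φ : EuclideanSpace ℂ (Fin n)) (hφ : ‖φ‖ = 1)
    (heig : ∀ α, matVec (F α) φ = c α • φ) :
    (-Complex.I) • (H * outer φ - outer φ * H) +
        (-Complex.I) • (G * outer φ - outer φ * G) + dissip γ F (outer φ) =
      (-Complex.I) •
        ((H + G + (Complex.I / 2) • ∑ α, (γ α : ℂ) • (conj (c α) • F α - c α • (F α)ᴴ))
            * outer φ -
          outer φ *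
            (H + G + (Complex.I / 2) • ∑ α, (γ α : ℂ) • (conj (c α) • F α - c α • (F α)ᴴ))) := by
  have hFρ : ∀ α, F α * outer φ = c α • outer φ := by
    intro α
    ext i j
    have h := congrArg (fun v => v i) (heig α)
    simp only [matVec, PiLp.toLp_apply, PiLp.smul_apply, smul_eq_mul] at h
    simp only [Matrix.mul_apply, outer, Matrix.smul_apply, smul_eq_mul]
    calc ∑ k, F α i k * (φ k * conj (φ j)) = (∑ k, F α i k * φ k) * conj (φ j) := by
          rw [Finset.sum_mul]; exact Finset.sum_congr rfl fun k _ => by ring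
      _ = c α * (φ i * conj (φ j)) := by rw [h]; ring
  have hρF : ∀ α, outer φ * (F α)ᴴ = conj (c α) • outer φ := by
    intro α
    ext i j
    have h := congrArg (fun v => v j) (heig α)
    simp only [matVec, PiLp.toLp_apply, PiLp.smul_apply, smul_eq_mul] at h
    simp only [Matrix.mul_apply, outer, Matrix.smul_apply, smul_eq_mul,
      Matrix.conjTranspose_apply]
    calc ∑ k, φ i * conj (φ k) * conj (F α j k)
        = φ i * conj (∑ k, F α j k * φ k) := by
          rw [map_sum, Finset.mul_sum]; exact Finset.sum_congr rfl fun k _ => by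
            rw [RingHom.map_mul]; ring
      _ = conj (c α) * (φ i * conj (φ j)) := by rw [h, RingHom.map_mul]; ring
  unfold dissip
  simp only [hFρ, smul_mul_assoc, hρF, mul_assoc, mul_smul_comm, ← mul_assoc, hρF, hFρ]
  simp only [mul_assoc, hFρ, mul_smul_comm]
  simp only [Matrix.add_mul, Matrix.mul_add, smul_mul_assoc, mul_smul_comm,
    Finset.sum_mul, Finset.mul_sum, Matrix.sub_mul, Matrix.mul_sub, hFρ, hρF,
    smul_sub, smul_add, smul_smul, Finset.smul_sum]
  rw [add_sub_add_comm, ← Finset.sum_sub_distrib]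
  congr 1
  · abel
  · refine Finset.sum_congr rfl fun α _ => ?_
    match_scalars <;> (ring_nf; simp [Complex.I_sq]; try ring)
end
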